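/- Let P be a monic polynomial over a field K. Then the companion matrix of the polynomial P(t(t−1)) is the sum of an idempotent matrix and a square-zero matrix. -/

import Mathlib

open Polynomial

/-- The companion matrix of a monic polynomial `P = t^n - a_{n-1} t^{n-1} - ⋯ - a_1 t - a_0`. -/
def companion {K : Type*} [Field K] (n : ℕ) (P : Polynomial K) :
    Matrix (Fin n) (Fin n) K := fun i j =>
  if (j : ℕ) = n - 1 then -(P.coeff i) else if (i : ℕ) = (j : ℕ) + 1 then 1 else 0

noncomputable section AuxCompanion

namespace AuxCompanion

variable {K : Type*} [Field K]

/-- the polynomial `(X²-X)^(j/2) * X^(j%2)`. -/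
def w (K : Type*) [Field K] (j : ℕ) : Polynomial K :=
  (X ^ 2 - X) ^ (j / 2) * X ^ (j % 2)

lemma monic_sigma : (X ^ 2 - X : Polynomial K).Monic :=
  monic_X_pow_sub (by simpa using degree_X_le)

lemma monic_w (j : ℕ) : (w K j).Monic :=
  (monic_sigma.pow _).mul (monic_X.pow _)

lemma natDegree_sigma : (X ^ 2 - X : Polynomial K).natDegree = 2 := by
  compute_degree!

lemma natDegree_w (j : ℕ) : (w K j).natDegree = j := by
  rw [w, (monic_sigma.pow _).natDegree_mul (monic_X.pow _),
    monic_sigma.natDegree_pow, natDegree_sigma, natDegree_X_pow]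
  omega

/-- change of basis matrix -/
def Umat (K : Type*) [Field K] (n : ℕ) : Matrix (Fin n) (Fin n) K :=
  fun i j => (w K j).coeff i

def A0 (K : Type*) [Field K] (n : ℕ) : Matrix (Fin n) (Fin n) K := fun i j =>
  if (i : ℕ) % 2 = 1 ∧ ((i : ℕ) = j ∨ (i : ℕ) = (j : ℕ) + 1) then 1 else 0

def B0 (K : Type*) [Field K] (n : ℕ) (P : Polynomial K) :
    Matrix (Fin n) (Fin n) K := fun i j =>
  if (j : ℕ) = n - 1 then (if (i : ℕ) % 2 = 0 then -P.coeff ((i : ℕ) / 2) else 0)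
  else if (j : ℕ) % 2 = 1 ∧ (i : ℕ) = (j : ℕ) + 1 then 1 else 0

lemma A0_sq (n : ℕ) : A0 K n * A0 K n = A0 K n := by
  ext i j
  rw [Matrix.mul_apply]
  have h : ∀ k : Fin n, A0 K n i k * A0 K n k j
      = if k = i then A0 K n i j else 0 := by
    intro k
    by_cases hk : k = i
    · subst hk
      by_cases hi : (k : ℕ) % 2 = 1
      · simp [A0, hi]
      · simp [A0, hi]
    · have hk' : (i : ℕ) ≠ (k : ℕ) := fun h => hk (Fin.ext h.symm)
      by_cases h1 : (i : ℕ) % 2 = 1 ∧ (i : ℕ) = (k : ℕ) + 1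
      · -- then k is even, so A0 K n k j = 0
        have hke : ¬ ((k : ℕ) % 2 = 1) := by omega
        simp [A0, hke, hk]
      · have : A0 K n i k = 0 := by
          simp only [A0, ite_eq_right_iff]
          intro h2
          exact absurd ⟨h2.1, h2.2.resolve_left hk'⟩ h1
        simp [this, hk]
  rw [Finset.sum_congr rfl (fun k _ => h k), Finset.sum_ite_eq']
  simp

lemma B0_sq (m : ℕ) (hm : 0 < m) (P : Polynomial K) :
    B0 K (2 * m) P * B0 K (2 * m) P = 0 := by
  ext i j
  rw [Matrix.mul_apply]
  apply Finset.sum_eq_zero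
  intro k _
  by_cases hk : (k : ℕ) % 2 = 1
  · -- B0 k j = 0 since rows of B0 are even
    have : B0 K (2 * m) P k j = 0 := by
      simp only [B0]
      split_ifs with h1 h2 h3
      · omega
      · rfl
      · omega
      · rfl
    rw [this, mul_zero]
  · -- B0 i k = 0 since columns of B0 are odd
    have : B0 K (2 * m) P i k = 0 := by
      have hk2 : (k : ℕ) ≠ 2 * m - 1 := by omega
      simp only [B0, hk2, if_false]
      split_ifs with h1
      · omega
      · rfl
    rw [this, zero_mul]

lemma umat_triangular (n : ℕ) : (Umat K n).BlockTriangular id := by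
  intro i j hij
  exact coeff_eq_zero_of_natDegree_lt (by simpa [natDegree_w] using hij)

lemma umat_det (n : ℕ) : IsUnit (Umat K n).det := by
  rw [Matrix.det_of_upperTriangular (umat_triangular n)]
  have : ∀ i : Fin n, Umat K n i i = 1 := by
    intro i
    have h := (monic_w (K := K) (i : ℕ)).coeff_natDegree
    rwa [natDegree_w] at h
  simp [this]

-- sum over even indices
lemma sum_range_even {M : Type*} [AddCommMonoid M] (m : ℕ) (h : ℕ → M) :
    (∑ k ∈ Finset.range (2 * m), if k % 2 = 0 then h k else 0)
      = ∑ i ∈ Finset.range m, h (2 * i) := by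
  induction m with
  | zero => simp
  | succ m ih =>
    have h2m : 2 * (m + 1) = (2 * m + 1) + 1 := by ring
    rw [h2m, Finset.sum_range_succ, Finset.sum_range_succ, ih, Finset.sum_range_succ]
    have h1 : (2 * m + 1) % 2 = 1 := by omega
    have h2 : (2 * m) % 2 = 0 := by omega
    simp [h1, h2]

-- pick one element sums
lemma sum_pick {n : ℕ} (c : ℕ) (hc : c < n) (f : Fin n → K) :
    (∑ k : Fin n, f k * (if (k : ℕ) = c then 1 else 0)) = f ⟨c, hc⟩ := by
  have h : ∀ k : Fin n, f k * (if (k : ℕ) = c then 1 else 0)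
      = if k = ⟨c, hc⟩ then f k else 0 := by
    intro k
    by_cases hk : k = ⟨c, hc⟩
    · subst hk; simp
    · have : (k : ℕ) ≠ c := by
        intro hcon; exact hk (Fin.ext hcon)
      simp [this, hk]
  rw [Finset.sum_congr rfl (fun k _ => h k), Finset.sum_ite_eq']
  simp

-- polynomial identities
lemma Xw_even (j : ℕ) (hj : j % 2 = 0) : X * w K j = w K (j + 1) := by
  have h1 : (j + 1) / 2 = j / 2 := by omega
  have h2 : (j + 1) % 2 = 1 := by omega
  simp only [w, h1, h2, hj]
  ring

lemma Xw_odd (j : ℕ) (hj : j % 2 = 1) : X * w K j = w K j + w K (j + 1) := by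
  have h1 : (j + 1) / 2 = j / 2 + 1 := by omega
  have h2 : (j + 1) % 2 = 0 := by omega
  simp only [w, h1, h2, hj]
  ring

lemma Q_expand (P : Polynomial K) (hP : P.Monic) :
    P.comp (X * (X - 1)) = (X ^ 2 - X) ^ P.natDegree
      + ∑ i ∈ Finset.range P.natDegree, C (P.coeff i) * (X ^ 2 - X) ^ i := by
  have hc : X * (X - 1) = (X ^ 2 - X : Polynomial K) := by ring
  have h : P.comp (X * (X - 1)) = eval₂ C (X ^ 2 - X) P := by rw [← hc]; rfl
  rw [h, Polynomial.eval₂_eq_sum_range, Finset.sum_range_succ, hP.coeff_natDegree]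
  rw [map_one, one_mul, add_comm]

lemma Xw_last (m : ℕ) (hm : 0 < m) (P : Polynomial K) (hP : P.Monic) (hd : P.natDegree = m) :
    X * w K (2 * m - 1) = P.comp (X * (X - 1)) + w K (2 * m - 1)
      + ∑ i ∈ Finset.range m, C (-P.coeff i) * w K (2 * i) := by
  have h1 : (2 * m - 1) / 2 = m - 1 := by omega
  have h2 : (2 * m - 1) % 2 = 1 := by omega
  have hw : w K (2 * m - 1) = (X ^ 2 - X) ^ (m - 1) * X := by
    simp only [w, h1, h2, pow_one]
  have hkey : X * w K (2 * m - 1) = (X ^ 2 - X) ^ m + w K (2 * m - 1) := by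
    have hσ : (X ^ 2 - X : Polynomial K) ^ m = (X ^ 2 - X) ^ (m - 1) * (X ^ 2 - X) := by
      rw [← pow_succ]
      congr 1
      omega
    rw [hw, hσ]
    ring
  have hsum : ∀ i ∈ Finset.range m, C (-P.coeff i) * w K (2 * i)
      = -(C (P.coeff i) * (X ^ 2 - X) ^ i) := by
    intro i _
    have e1 : (2 * i) / 2 = i := by omega
    have e2 : (2 * i) % 2 = 0 := by omega
    simp only [w, e1, e2, pow_zero, mul_one, map_neg, neg_mul]
  rw [hkey, Q_expand P hP, hd, Finset.sum_congr rfl hsum, Finset.sum_neg_distrib]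
  abel

lemma hUlast (m : ℕ) (hm : 0 < m) (j : Fin (2 * m)) :
    Umat K (2 * m) ⟨2 * m - 1, by omega⟩ j = if (j : ℕ) = 2 * m - 1 then 1 else 0 := by
  by_cases hj : (j : ℕ) = 2 * m - 1
  · have h := (monic_w (K := K) (j : ℕ)).coeff_natDegree
    rw [natDegree_w] at h
    simp only [Umat, hj, if_pos]
    rw [← hj]
    exact h
  · have hlt : (j : ℕ) < 2 * m - 1 := by have := j.isLt; omega
    simp only [Umat, hj, if_neg, ite_false]
    exact coeff_eq_zero_of_natDegree_lt (by rw [natDegree_w]; exact hlt)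

lemma main_eq (m : ℕ) (hm : 0 < m) (P : Polynomial K) (hP : P.Monic)
    (hd : P.natDegree = m) :
    companion (2 * m) (P.comp (X * (X - 1))) * Umat K (2 * m)
      = Umat K (2 * m) * (A0 K (2 * m) + B0 K (2 * m) P) := by
  classical
  set Q := P.comp (X * (X - 1)) with hQ
  have hn1 : 2 * m - 1 < 2 * m := by omega
  set lastI : Fin (2 * m) := ⟨2 * m - 1, hn1⟩ with hlastI
  ext i j
  rw [Matrix.mul_apply, Matrix.mul_apply]
  -- LHS
  have hL : ∀ k : Fin (2 * m), companion (2 * m) Q i k * Umat K (2 * m) k j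
      = (if k = lastI then -(Q.coeff i) * Umat K (2 * m) k j else 0)
        + (if (i : ℕ) = (k : ℕ) + 1 then Umat K (2 * m) k j else 0) := by
    intro k
    by_cases hk : (k : ℕ) = 2 * m - 1
    · have hk' : k = lastI := Fin.ext hk
      have hik : ¬ ((i : ℕ) = 2 * m - 1 + 1) := by have := i.isLt; omega
      simp [companion, hk, hk', hik, hlastI]
    · have hk' : k ≠ lastI := fun h => hk (by rw [h])
      simp only [companion, hk, if_false, hk']
      split_ifs <;> ring
  rw [Finset.sum_congr rfl fun k _ => hL k, Finset.sum_add_distrib,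
    Finset.sum_ite_eq' Finset.univ lastI]
  simp only [Finset.mem_univ, if_true]
  have hshift : (∑ k : Fin (2 * m), if (i : ℕ) = (k : ℕ) + 1
      then Umat K (2 * m) k j else 0) = (X * w K (j : ℕ)).coeff i := by
    rcases Nat.eq_zero_or_pos (i : ℕ) with hi | hi
    · rw [Finset.sum_eq_zero, hi, Polynomial.mul_coeff_zero]
      · simp
      · intro k _
        have h0 : ¬ ((i : ℕ) = (k : ℕ) + 1) := by omega
        simp [h0]
    · obtain ⟨t, ht⟩ : ∃ t, (i : ℕ) = t + 1 := ⟨(i : ℕ) - 1, by omega⟩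
      have htlt : t < 2 * m := by have := i.isLt; omega
      have hcongr : ∀ k : Fin (2 * m),
          (if (i : ℕ) = (k : ℕ) + 1 then Umat K (2 * m) k j else 0)
          = if k = ⟨t, htlt⟩ then Umat K (2 * m) k j else 0 := by
        intro k
        by_cases hk : k = ⟨t, htlt⟩
        · subst hk; simp [ht]
        · have h0 : ¬ ((i : ℕ) = (k : ℕ) + 1) := by
            intro hc
            exact hk (Fin.ext (show (k : ℕ) = t by omega))
          simp [h0, hk]
      rw [Finset.sum_congr rfl fun k _ => hcongr k, Finset.sum_ite_eq']
      simp only [Finset.mem_univ, if_true, Umat]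
      rw [ht, Polynomial.coeff_X_mul]
  rw [hshift, hUlast m hm j]
  -- RHS: case on the column j
  by_cases hjlast : (j : ℕ) = 2 * m - 1
  · -- last column
    have hjodd : (j : ℕ) % 2 = 1 := by omega
    have hcol : ∀ k : Fin (2 * m), (A0 K (2 * m) + B0 K (2 * m) P) k j
        = (if (k : ℕ) = (j : ℕ) then 1 else 0)
          + (if (k : ℕ) % 2 = 0 then -P.coeff ((k : ℕ) / 2) else 0) := by
      intro k
      simp only [Matrix.add_apply, A0, B0]
      rw [if_pos hjlast]
      congr 1
      by_cases hk : (k : ℕ) = (j : ℕ)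
      · rw [if_pos ⟨by omega, Or.inl hk⟩, if_pos hk]
      · have : ¬ ((k : ℕ) % 2 = 1 ∧ ((k : ℕ) = j ∨ (k : ℕ) = (j : ℕ) + 1)) := by
          rintro ⟨ho, hc | hc⟩
          · exact hk hc
          · have := k.isLt; omega
        rw [if_neg this, if_neg hk]
    have hsplit : (∑ k : Fin (2 * m), Umat K (2 * m) i k
        * (A0 K (2 * m) + B0 K (2 * m) P) k j)
        = (∑ k : Fin (2 * m), Umat K (2 * m) i k * (if (k : ℕ) = (j : ℕ) then 1 else 0))
          + ∑ k : Fin (2 * m), Umat K (2 * m) i k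
            * (if (k : ℕ) % 2 = 0 then -P.coeff ((k : ℕ) / 2) else 0) := by
      rw [← Finset.sum_add_distrib]
      refine Finset.sum_congr rfl fun k _ => ?_
      rw [hcol k, mul_add]
    rw [hsplit, sum_pick (j : ℕ) j.isLt]
    have hS : (∑ k : Fin (2 * m), Umat K (2 * m) i k
        * (if (k : ℕ) % 2 = 0 then -P.coeff ((k : ℕ) / 2) else 0))
        = ∑ t ∈ Finset.range m, (w K (2 * t)).coeff i * (-P.coeff t) := by
      have e : ∀ k : Fin (2 * m), Umat K (2 * m) i k
          * (if (k : ℕ) % 2 = 0 then -P.coeff ((k : ℕ) / 2) else 0)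
          = if (k : ℕ) % 2 = 0 then (w K (k : ℕ)).coeff i * (-P.coeff ((k : ℕ) / 2)) else 0 := by
        intro k
        simp only [Umat, mul_ite, mul_zero]
      rw [Finset.sum_congr rfl fun k _ => e k,
        Fin.sum_univ_eq_sum_range
          (fun t => if t % 2 = 0 then (w K t).coeff i * (-P.coeff (t / 2)) else 0),
        sum_range_even]
      refine Finset.sum_congr rfl fun t _ => ?_
      have : 2 * t / 2 = t := by omega
      rw [this]
    rw [hS]
    -- use Xw_last
    have hcoeff := congrArg (fun p => Polynomial.coeff p (i : ℕ))
      (Xw_last m hm P hP hd)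
    simp only [Polynomial.coeff_add, Polynomial.finset_sum_coeff,
      Polynomial.coeff_C_mul] at hcoeff
    rw [← hQ] at hcoeff
    rw [if_pos hjlast]
    simp only [Fin.eta, Umat]
    rw [hjlast, hcoeff]
    have hcomm : ∀ t ∈ Finset.range m, (w K (2 * t)).coeff (i : ℕ) * (-P.coeff t)
        = -P.coeff t * (w K (2 * t)).coeff (i : ℕ) := fun t _ => mul_comm _ _
    rw [Finset.sum_congr rfl hcomm]
    ring
  · -- not the last column
    by_cases hj0 : (j : ℕ) % 2 = 0
    · -- even column
      have hjlt : (j : ℕ) + 1 < 2 * m := by have := j.isLt; omega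
      have hcol : ∀ k : Fin (2 * m), (A0 K (2 * m) + B0 K (2 * m) P) k j
          = if (k : ℕ) = (j : ℕ) + 1 then 1 else 0 := by
        intro k
        simp only [Matrix.add_apply, A0, B0, hjlast, if_false]
        have hb : ¬ ((j : ℕ) % 2 = 1 ∧ (k : ℕ) = (j : ℕ) + 1) := by omega
        rw [if_neg hb, add_zero]
        by_cases hk : (k : ℕ) = (j : ℕ) + 1
        · rw [if_pos ⟨by omega, Or.inr hk⟩, if_pos hk]
        · have : ¬ ((k : ℕ) % 2 = 1 ∧ ((k : ℕ) = j ∨ (k : ℕ) = (j : ℕ) + 1)) := by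
            rintro ⟨ho, hc | hc⟩
            · omega
            · exact hk hc
          rw [if_neg this, if_neg hk]
      rw [Finset.sum_congr rfl fun k _ => by rw [hcol k], sum_pick ((j : ℕ) + 1) hjlt]
      simp only [Umat, if_neg hjlast, Xw_even (K := K) (j : ℕ) hj0]
      ring
    · -- odd column, not last
      have hj1 : (j : ℕ) % 2 = 1 := by omega
      have hjlt : (j : ℕ) + 1 < 2 * m := by have := j.isLt; omega
      have hcol : ∀ k : Fin (2 * m), (A0 K (2 * m) + B0 K (2 * m) P) k j
          = (if (k : ℕ) = (j : ℕ) then 1 else 0)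
            + (if (k : ℕ) = (j : ℕ) + 1 then 1 else 0) := by
        intro k
        simp only [Matrix.add_apply, A0, B0, hjlast, if_false]
        congr 1
        · by_cases hk : (k : ℕ) = (j : ℕ)
          · rw [if_pos ⟨by omega, Or.inl hk⟩, if_pos hk]
          · have : ¬ ((k : ℕ) % 2 = 1 ∧ ((k : ℕ) = j ∨ (k : ℕ) = (j : ℕ) + 1)) := by
              rintro ⟨ho, hc | hc⟩
              · exact hk hc
              · omega
            rw [if_neg this, if_neg hk]
        · by_cases hk : (k : ℕ) = (j : ℕ) + 1
          · rw [if_pos ⟨hj1, hk⟩, if_pos hk]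
          · have : ¬ ((j : ℕ) % 2 = 1 ∧ (k : ℕ) = (j : ℕ) + 1) := by
              rintro ⟨_, hc⟩
              exact hk hc
            rw [if_neg this, if_neg hk]
      have hsplit : (∑ k : Fin (2 * m), Umat K (2 * m) i k
          * (A0 K (2 * m) + B0 K (2 * m) P) k j)
          = (∑ k : Fin (2 * m), Umat K (2 * m) i k * (if (k : ℕ) = (j : ℕ) then 1 else 0))
            + ∑ k : Fin (2 * m), Umat K (2 * m) i k
              * (if (k : ℕ) = (j : ℕ) + 1 then 1 else 0) := by
        rw [← Finset.sum_add_distrib]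
        refine Finset.sum_congr rfl fun k _ => ?_
        rw [hcol k, mul_add]
      rw [hsplit, sum_pick (j : ℕ) j.isLt, sum_pick ((j : ℕ) + 1) hjlt]
      simp only [Umat, if_neg hjlast]
      have := congrArg (fun p => Polynomial.coeff p (i : ℕ)) (Xw_odd (K := K) (j : ℕ) hj1)
      simp only [Polynomial.coeff_add] at this
      rw [this]
      ring

end AuxCompanion

end AuxCompanion

theorem stmt_6 {K : Type*} [Field K] (P : Polynomial K) (hP : P.Monic) :
    ∃ A B : Matrix (Fin ((P.comp (X * (X - 1))).natDegree))
        (Fin ((P.comp (X * (X - 1))).natDegree)) K,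
      A ^ 2 = A ∧ B ^ 2 = 0 ∧
      companion ((P.comp (X * (X - 1))).natDegree) (P.comp (X * (X - 1))) = A + B := by
  classical
  open AuxCompanion in
  have hq2 : (X * (X - 1) : Polynomial K).natDegree = 2 := by compute_degree!
  have hn : (P.comp (X * (X - 1))).natDegree = 2 * P.natDegree := by
    rw [natDegree_comp, hq2]; ring
  rcases Nat.eq_zero_or_pos P.natDegree with hm0 | hmpos
  · rw [hn, hm0, Nat.mul_zero]
    exact ⟨0, 0, by simp, by simp, Subsingleton.elim _ _⟩
  rw [hn]
  set m := P.natDegree with hm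
  set U := AuxCompanion.Umat K (2 * m) with hU
  have hUdet : IsUnit U.det := AuxCompanion.umat_det (2 * m)
  have hUU : U⁻¹ * U = 1 := Matrix.nonsing_inv_mul U hUdet
  have hUU' : U * U⁻¹ = 1 := Matrix.mul_nonsing_inv U hUdet
  have conj_mul : ∀ M N : Matrix (Fin (2 * m)) (Fin (2 * m)) K,
      (U * M * U⁻¹) * (U * N * U⁻¹) = U * (M * N) * U⁻¹ := by
    intro M N
    calc (U * M * U⁻¹) * (U * N * U⁻¹) = U * M * ((U⁻¹ * U) * (N * U⁻¹)) := by
          simp only [Matrix.mul_assoc]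
      _ = U * M * (N * U⁻¹) := by rw [hUU, Matrix.one_mul]
      _ = U * (M * N) * U⁻¹ := by simp only [Matrix.mul_assoc]
  refine ⟨U * AuxCompanion.A0 K (2 * m) * U⁻¹, U * AuxCompanion.B0 K (2 * m) P * U⁻¹,
    ?_, ?_, ?_⟩
  · rw [pow_two, conj_mul, AuxCompanion.A0_sq]
  · rw [pow_two, conj_mul, AuxCompanion.B0_sq m hmpos, Matrix.mul_zero, Matrix.zero_mul]
  · have hmain := AuxCompanion.main_eq m hmpos P hP rfl
    rw [← Matrix.add_mul, ← Matrix.mul_add, ← hmain, Matrix.mul_assoc, hUU',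
      Matrix.mul_one]
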